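/- If an n-person concave game satisfies strict payoff monotonicity, i.e., ⟨F(s) − F(s'), s − s'⟩ ≤ 0 for all s, s' ∈ S with equality only if s = s', then the game has at most one Nash equilibrium. -/

import Mathlib

open scoped RealInnerProductSpace

lemma grad_dir_nonpos {d : ℕ} (f : EuclideanSpace ℝ (Fin d) → ℝ)
    (hf : Differentiable ℝ f) (a x : EuclideanSpace ℝ (Fin d))
    (hmax : ∀ t : ℝ, t ∈ Set.Icc (0:ℝ) 1 → f (a + t • (x - a)) ≤ f a) :
    ⟪gradient f a, x - a⟫ ≤ 0 := by
  set v := x - a with hv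
  have h1 : HasDerivAt (fun t : ℝ => a + t • v) v 0 := by
    simpa using ((hasDerivAt_id (0:ℝ)).smul_const v).const_add a
  have h2 : HasFDerivAt f (InnerProductSpace.toDual ℝ _ (gradient f a)) a :=
    (hf a).hasGradientAt.hasFDerivAt
  have hg : HasDerivAt (fun t : ℝ => f (a + t • v)) ⟪gradient f a, v⟫ 0 := by
    have h2' : HasFDerivAt f (InnerProductSpace.toDual ℝ _ (gradient f a)) (a + (0:ℝ) • v) := by
      simpa using h2
    have := h2'.comp_hasDerivAt 0 h1
    exact this.congr_deriv (by simp)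
  have htend := hasDerivAt_iff_tendsto_slope.mp hg
  have htend' : Filter.Tendsto (slope (fun t : ℝ => f (a + t • v)) 0)
      (nhdsWithin 0 (Set.Ioi 0)) (nhds ⟪gradient f a, v⟫) :=
    htend.mono_left (nhdsWithin_mono _ (fun t ht => ne_of_gt ht))
  refine le_of_tendsto htend' ?_
  filter_upwards [Ioo_mem_nhdsGT_of_mem (by constructor <;> norm_num : (0:ℝ) ∈ Set.Ico 0 1)]
    with t ht
  have hle : f (a + t • v) ≤ f a := hmax t ⟨le_of_lt ht.1, le_of_lt ht.2⟩
  have : slope (fun t : ℝ => f (a + t • v)) 0 t = (f (a + t • v) - f a) / t := by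
    simp [slope_def_field, div_eq_inv_mul]
  rw [this]
  exact div_nonpos_of_nonpos_of_nonneg (by linarith) (le_of_lt ht.1)

/-- In an `n`-person concave game satisfying strict payoff monotonicity (Rosen's
diagonally strict concavity), there is at most one Nash equilibrium. -/
theorem strict_monotonicity_unique_nash
    (n d : ℕ)
    (S : Fin n → Set (EuclideanSpace ℝ (Fin d)))
    (hcomp : ∀ i, IsCompact (S i)) (hconv : ∀ i, Convex ℝ (S i))
    (util : Fin n → (Fin n → EuclideanSpace ℝ (Fin d)) → ℝ)
    (hconc : ∀ i s, ConcaveOn ℝ Set.univ fun x => util i (Function.update s i x))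
    (hdiff : ∀ i s, Differentiable ℝ fun x => util i (Function.update s i x))
    (F : Fin n → (Fin n → EuclideanSpace ℝ (Fin d)) → EuclideanSpace ℝ (Fin d))
    (hF : ∀ i s, F i s = gradient (fun x => util i (Function.update s i x)) (s i))
    (hFcont : ∀ i, Continuous (F i))
    (hmono : ∀ s s' : Fin n → EuclideanSpace ℝ (Fin d),
      (∀ i, s i ∈ S i) → (∀ i, s' i ∈ S i) →
        ∑ i, ⟪F i s - F i s', s i - s' i⟫ ≤ 0 ∧
          (∑ i, ⟪F i s - F i s', s i - s' i⟫ = 0 → s = s'))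
    (s1 s2 : Fin n → EuclideanSpace ℝ (Fin d))
    (hmem1 : ∀ i, s1 i ∈ S i) (hmem2 : ∀ i, s2 i ∈ S i)
    (hnash1 : ∀ i, ∀ x ∈ S i, util i (Function.update s1 i x) ≤ util i s1)
    (hnash2 : ∀ i, ∀ x ∈ S i, util i (Function.update s2 i x) ≤ util i s2) :
    s1 = s2 := by
  have key : ∀ (s s' : Fin n → EuclideanSpace ℝ (Fin d)), (∀ i, s i ∈ S i) → (∀ i, s' i ∈ S i) →
      (∀ i, ∀ x ∈ S i, util i (Function.update s i x) ≤ util i s) →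
      ∀ i, ⟪F i s, s' i - s i⟫ ≤ 0 := by
    intro s s' hm hm' hnash i
    rw [hF]
    apply grad_dir_nonpos _ (hdiff i s)
    intro t ht
    have hmem : s i + t • (s' i - s i) ∈ S i := by
      have := (hconv i) (hm i) (hm' i) (by linarith [ht.1, ht.2] : (0:ℝ) ≤ 1 - t) ht.1 (by ring)
      convert this using 1
      module
    have := hnash i _ hmem
    calc util i (Function.update s i (s i + t • (s' i - s i))) ≤ util i s := this
      _ = util i (Function.update s i (s i)) := by rw [Function.update_eq_self]
  have h12 := key s1 s2 hmem1 hmem2 hnash1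
  have h21 := key s2 s1 hmem2 hmem1 hnash2
  have hsum : (0:ℝ) ≤ ∑ i, ⟪F i s1 - F i s2, s1 i - s2 i⟫ := by
    apply Finset.sum_nonneg
    intro i _
    have e1 := h12 i
    have e2 := h21 i
    have : ⟪F i s1 - F i s2, s1 i - s2 i⟫
        = -⟪F i s1, s2 i - s1 i⟫ - ⟪F i s2, s1 i - s2 i⟫ := by
      simp [inner_sub_left, inner_sub_right, real_inner_comm]; ring
    rw [this]; linarith
  obtain ⟨hle, heq⟩ := hmono s1 s2 hmem1 hmem2
  exact heq (le_antisymm hle hsum)
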